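/- Let Q be a Hermitian d×d matrix with simple eigenvalue q_k, let β < 0, and λ_k := q_k − β². If λ_k < q₁ (the smallest eigenvalue of Q), then det(β·I − M(λ_k)) = 0 where M(λ) = −√(Q − λ·I), and the kernel of β·I − M(λ_k) is one-dimensional (spanned by the eigenvector of Q for q_k). -/

import Mathlib

open Matrix ComplexOrder

namespace Matrix.PosSemidef

/-- The positive semidefinite square root, as defined in Mathlib (December 2024), since removed. -/
noncomputable def sqrt {n 𝕜 : Type*} [Fintype n] [RCLike 𝕜] [DecidableEq n] {A : Matrix n n 𝕜}
    (hA : A.PosSemidef) : Matrix n n 𝕜 :=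
  (hA.1.eigenvectorUnitary : Matrix n n 𝕜) * diagonal ((↑) ∘ (√·) ∘ hA.1.eigenvalues) *
    (star hA.1.eigenvectorUnitary : Matrix n n 𝕜)

end Matrix.PosSemidef

open scoped MatrixOrder in
lemma aux_sqrt_eq_cfc {n : Type*} [Fintype n] [DecidableEq n] {A : Matrix n n ℂ}
    (hA : A.PosSemidef) : hA.sqrt = CFC.sqrt A := by
  rw [CFC.sqrt_eq_cfc, cfc_nnreal_eq_real _ A hA.nonneg, hA.1.cfc_eq]
  simp only [PosSemidef.sqrt, IsHermitian.cfc, Unitary.conjStarAlgAut_apply]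
  congr 3
  funext i
  simp [Real.coe_sqrt, hA.eigenvalues_nonneg i]

/-- Conjugation of a positive definite matrix by a matrix with injective
conjugate-transpose action is positive definite. -/
lemma aux_posDef_conj {n : Type*} [Fintype n] [DecidableEq n]
    {D : Matrix n n ℂ} (hD : D.PosDef) (B : Matrix n n ℂ)
    (hB : ∀ x, B *ᵥ x = 0 → x = 0) : (Bᴴ * D * B).PosDef :=
  PosDef.of_dotProduct_mulVec_pos (isHermitian_conjTranspose_mul_mul B hD.1) fun x hx => by
    simpa only [star_mulVec, dotProduct_mulVec, vecMul_vecMul] using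
      hD.dotProduct_mulVec_pos (fun h => hx (hB x h))

/-- If q_k is a simple eigenvalue of the Hermitian matrix Q, β < 0 and
λ_k = q_k − β² lies below the spectrum of Q, then det(β·I − M(λ_k)) = 0
with M(λ) = −√(Q − λ·I), and ker(β·I − M(λ_k)) is one-dimensional. -/
theorem simple_eigenvalue_branch_point (d : ℕ) (Q : Matrix (Fin d) (Fin d) ℂ)
    (hQ : Q.IsHermitian) (k : Fin d)
    (hsimple : ∀ j, hQ.eigenvalues j = hQ.eigenvalues k → j = k)
    (β : ℝ) (hβ : β < 0)
    (lamk : ℝ) (hlamk : lamk = hQ.eigenvalues k - β ^ 2)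
    (hbelow : ∀ i, lamk < hQ.eigenvalues i) :
    ∃ hpd : (Q - (lamk : ℂ) • (1 : Matrix (Fin d) (Fin d) ℂ)).PosDef,
      ((β : ℂ) • (1 : Matrix (Fin d) (Fin d) ℂ) - (-hpd.posSemidef.sqrt)).det = 0 ∧
      Module.finrank ℂ
        (LinearMap.ker (Matrix.toLin'
          ((β : ℂ) • (1 : Matrix (Fin d) (Fin d) ℂ) - (-hpd.posSemidef.sqrt)))) = 1 := by
  have hd : 0 < d := k.pos
  set ev : Fin d → ℝ := hQ.eigenvalues with hev
  set U : Matrix (Fin d) (Fin d) ℂ := (hQ.eigenvectorUnitary : Matrix (Fin d) (Fin d) ℂ) with hUdef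
  have hU1 : U * star U = 1 := Matrix.mem_unitaryGroup_iff.mp hQ.eigenvectorUnitary.2
  have hU2 : star U * U = 1 := Matrix.mem_unitaryGroup_iff'.mp hQ.eigenvectorUnitary.2
  have hpos : ∀ i, 0 < ev i - lamk := fun i => sub_pos.mpr (hbelow i)
  -- Conjugating a scalar matrix by U
  have hconj : ∀ c : ℂ,
      U * diagonal (fun _ => c) * star U = c • 1 := by
    intro c
    rw [← smul_one_eq_diagonal, Matrix.mul_smul, Matrix.smul_mul, Matrix.mul_one, hU1]
  -- Diagonalization of A = Q − λ_k·1
  have hA_eq : Q - (lamk : ℂ) • (1 : Matrix (Fin d) (Fin d) ℂ)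
      = U * diagonal (fun i => ((ev i - lamk : ℝ) : ℂ)) * star U := by
    conv_lhs => rw [hQ.spectral_theorem, Unitary.conjStarAlgAut_apply, ← hconj (lamk : ℂ)]
    rw [← Matrix.sub_mul, ← Matrix.mul_sub, diagonal_sub]
    congr 2
    funext i
    simp [sub_eq_add_neg, hev]
  -- A is positive definite
  have hUinj : ∀ x : Fin d → ℂ, (star U) *ᵥ x = 0 → x = 0 := by
    intro x hx
    have h1 : U *ᵥ ((star U) *ᵥ x) = x := by
      rw [mulVec_mulVec, hU1, one_mulVec]
    rw [hx, mulVec_zero] at h1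
    exact h1.symm
  have hpd : (Q - (lamk : ℂ) • (1 : Matrix (Fin d) (Fin d) ℂ)).PosDef := by
    rw [hA_eq]
    have hDpd : (diagonal (fun i => ((ev i - lamk : ℝ) : ℂ))).PosDef := by
      refine Matrix.PosDef.diagonal fun i => ?_
      exact_mod_cast hpos i
    have := aux_posDef_conj hDpd (star U) hUinj
    rwa [star_eq_conjTranspose, conjTranspose_conjTranspose] at this
  refine ⟨hpd, ?_⟩
  -- Identify the square root
  set S : Matrix (Fin d) (Fin d) ℂ :=
    U * diagonal (fun i => (Real.sqrt (ev i - lamk) : ℂ)) * star U with hSdef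
  have hS_psd : S.PosSemidef := by
    refine Matrix.PosSemidef.mul_mul_conjTranspose_same ?_ U
    refine posSemidef_diagonal_iff.mpr fun i => ?_
    exact_mod_cast Real.sqrt_nonneg _
  have hS_sq : S ^ 2 = Q - (lamk : ℂ) • (1 : Matrix (Fin d) (Fin d) ℂ) := by
    rw [hA_eq, pow_two, hSdef]
    rw [show (U * diagonal (fun i => (Real.sqrt (ev i - lamk) : ℂ)) * star U) *
        (U * diagonal (fun i => (Real.sqrt (ev i - lamk) : ℂ)) * star U)
        = U * (diagonal (fun i => (Real.sqrt (ev i - lamk) : ℂ)) * ((star U * U) *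
          diagonal (fun i => (Real.sqrt (ev i - lamk) : ℂ)))) * star U by
        simp only [Matrix.mul_assoc], hU2, Matrix.one_mul, ← Matrix.mul_assoc,
      Matrix.mul_assoc U, diagonal_mul_diagonal]
    have hfun : (fun i => (Real.sqrt (ev i - lamk) : ℂ) * (Real.sqrt (ev i - lamk) : ℂ))
        = fun i => ((ev i - lamk : ℝ) : ℂ) := by
      funext i
      rw [← Complex.ofReal_mul, Real.mul_self_sqrt (hpos i).le]
    rw [hfun]
  have hsqrt : S = hpd.posSemidef.sqrt := by
    open scoped MatrixOrder in
    rw [aux_sqrt_eq_cfc, CFC.sqrt_unique (a := Q - (lamk : ℂ) • (1 : Matrix (Fin d) (Fin d) ℂ))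
      (b := S) (by rw [← sq]; exact hS_sq) hS_psd.nonneg]
  -- Diagonalization of B = β·1 + S
  set w : Fin d → ℂ := fun i => (β : ℂ) + (Real.sqrt (ev i - lamk) : ℂ) with hwdef
  have hB_eq : (β : ℂ) • (1 : Matrix (Fin d) (Fin d) ℂ) - (-hpd.posSemidef.sqrt)
      = U * diagonal w * star U := by
    rw [← hsqrt, sub_neg_eq_add, hSdef, ← hconj (β : ℂ),
      ← Matrix.add_mul, ← Matrix.mul_add, diagonal_add]
  -- the zero pattern of w
  have hw : ∀ i, w i = 0 ↔ i = k := by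
    intro i
    constructor
    · intro h
      have h' : ((β + Real.sqrt (ev i - lamk) : ℝ) : ℂ) = 0 := by push_cast; exact h
      have h'' : β + Real.sqrt (ev i - lamk) = 0 := by exact_mod_cast h'
      have hs : Real.sqrt (ev i - lamk) = -β := by linarith
      have hsq : ev i - lamk = β ^ 2 := by
        have h3 := Real.sq_sqrt (hpos i).le
        rw [hs] at h3
        nlinarith [h3]
      apply hsimple
      rw [hlamk] at hsq
      linarith
    · intro hik
      have hk : ev i - lamk = β ^ 2 := by rw [hlamk, hik]; ring
      have hss : Real.sqrt (ev i - lamk) = -β := by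
        rw [hk, Real.sqrt_sq_eq_abs, abs_of_neg hβ]
      show (β : ℂ) + (Real.sqrt (ev i - lamk) : ℂ) = 0
      rw [hss]
      push_cast
      ring
  constructor
  · -- determinant vanishes
    rw [hB_eq, det_mul, det_mul, det_diagonal,
      Finset.prod_eq_zero (Finset.mem_univ k) ((hw k).mpr rfl), mul_zero, zero_mul]
  · -- kernel is one-dimensional
    have hdetU : U.det * (star U).det = 1 := by
      rw [← det_mul, hU1, det_one]
    have hUu : IsUnit U.det := IsUnit.of_mul_eq_one _ hdetU
    have hsUu : IsUnit (star U).det := IsUnit.of_mul_eq_one _ (by rwa [mul_comm] at hdetU)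
    have hrank : ((β : ℂ) • (1 : Matrix (Fin d) (Fin d) ℂ) - (-hpd.posSemidef.sqrt)).rank
        = d - 1 := by
      rw [hB_eq, rank_mul_eq_left_of_isUnit_det _ _ hsUu,
        rank_mul_eq_right_of_isUnit_det _ _ hUu, rank_diagonal]
      have hcard : Fintype.card {i // w i ≠ 0} = Fintype.card {i // ¬ i = k} :=
        Fintype.card_congr (Equiv.subtypeEquivRight fun i => not_congr (hw i))
      rw [hcard, Fintype.card_subtype_compl, Fintype.card_subtype_eq, Fintype.card_fin]
    set B := (β : ℂ) • (1 : Matrix (Fin d) (Fin d) ℂ) - (-hpd.posSemidef.sqrt) with hBdef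
    have hrn := LinearMap.finrank_range_add_finrank_ker (B.mulVecLin)
    have hfr : Module.finrank ℂ (Fin d → ℂ) = d := by simp
    rw [hfr] at hrn
    have hrange : Module.finrank ℂ (LinearMap.range B.mulVecLin) = d - 1 := hrank
    rw [Matrix.toLin'_apply']
    omega
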